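/- arXiv:1808.01972 — 2 statements merged into one kernel-verified Lean document; each statement's English description precedes it below -/
import Mathlib

section
/- The set SO(N; ℚ) of rotations R ∈ SO(N) such that R e_i ∈ ℚ^N for every i = 1, …, N is dense in SO(N) (with respect to the operator or Euclidean matrix norm). -/
open Matrix

section Aux

variable {N : ℕ}

/-- If the determinant of `M + diagonal d` vanishes for all `±1`-vectors `d` supported on `K`
(and zero off `K`), then `det M = 0`. -/
private lemma det_zero_of_signs {N : ℕ} (M : Matrix (Fin N) (Fin N) ℝ) :
    ∀ K : Finset (Fin N),
      (∀ d : Fin N → ℝ, (∀ i ∈ K, d i = 1 ∨ d i = -1) → (∀ i ∉ K, d i = 0) →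
        (M + Matrix.diagonal d).det = 0) → M.det = 0 := by
  intro K
  induction K using Finset.induction_on with
  | empty =>
    intro H
    have := H (fun _ => 0) (by simp) (by simp)
    simpa using this
  | @insert a K ha ih =>
    intro H
    apply ih
    intro d hd1 hd2
    have hda : d a = 0 := hd2 a ha
    set M₀ := M + Matrix.diagonal d with hM₀
    have key : ∀ c : ℝ, M + Matrix.diagonal (Function.update d a c)
        = M₀.updateCol a ((fun i => M₀ i a) + Pi.single a c) := by
      intro c
      ext i j
      by_cases hj : j = a
      · by_cases hi : i = a
        · simp [hM₀, Matrix.updateCol_apply, Matrix.diagonal_apply, hda, hi, hj,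
            Matrix.add_apply, Pi.single_apply, Function.update_apply]
        · simp [hM₀, Matrix.updateCol_apply, Matrix.diagonal_apply, hi, hj,
            Matrix.add_apply, Pi.single_apply, Function.update_apply]
      · have hia : i = j → i ≠ a := fun hij => hij ▸ hj
        by_cases hij : i = j
        · simp [hM₀, Matrix.updateCol_apply, Matrix.diagonal_apply, hj, hij,
            hia hij, Matrix.add_apply, Pi.single_apply, Function.update_apply]
        · simp [hM₀, Matrix.updateCol_apply, Matrix.diagonal_apply, hj, hij,
            Matrix.add_apply, Pi.single_apply, Function.update_apply]
    have hdet : ∀ c : ℝ, (M + Matrix.diagonal (Function.update d a c)).det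
        = M₀.det + c * (M₀.updateCol a (Pi.single a 1)).det := by
      intro c
      rw [key c, Matrix.det_updateCol_add, Matrix.updateCol_eq_self]
      congr 1
      have hsingle : (Pi.single a c : Fin N → ℝ) = c • (Pi.single a (1:ℝ) : Fin N → ℝ) := by
        ext x
        by_cases hx : x = a <;> simp [Pi.single_apply, hx]
      rw [hsingle, Matrix.det_updateCol_smul]
    have hp := H (Function.update d a 1) ?_ ?_
    rotate_left
    · intro i hi
      by_cases h : i = a
      · subst h; simp
      · rcases Finset.mem_insert.mp hi with h' | h'
        · exact absurd h' h
        · simpa [Function.update_apply, h] using hd1 i h'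
    · intro i hi
      have h1 : i ≠ a := fun h => hi (h ▸ Finset.mem_insert_self a K)
      have h2 : i ∉ K := fun h => hi (Finset.mem_insert_of_mem h)
      simp [Function.update_apply, h1, hd2 i h2]
    have hm := H (Function.update d a (-1)) ?_ ?_
    rotate_left
    · intro i hi
      by_cases h : i = a
      · subst h; simp
      · rcases Finset.mem_insert.mp hi with h' | h'
        · exact absurd h' h
        · simpa [Function.update_apply, h] using hd1 i h'
    · intro i hi
      have h1 : i ≠ a := fun h => hi (h ▸ Finset.mem_insert_self a K)
      have h2 : i ∉ K := fun h => hi (Finset.mem_insert_of_mem h)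
      simp [Function.update_apply, h1, hd2 i h2]
    rw [hdet 1] at hp
    rw [hdet (-1)] at hm
    linarith

/-- There is a `±1` diagonal matrix `D` with `det (S + D) ≠ 0`, provided `det S ≠ 0`. -/
private lemma exists_sign_diag {N : ℕ} (S : Matrix (Fin N) (Fin N) ℝ) (h : S.det ≠ 0) :
    ∃ d : Fin N → ℝ, (∀ i, d i = 1 ∨ d i = -1) ∧ (S + Matrix.diagonal d).det ≠ 0 := by
  by_contra hc
  push_neg at hc
  apply h
  apply det_zero_of_signs S Finset.univ
  intro d hd1 _
  exact hc d (fun i => hd1 i (Finset.mem_univ i))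

/-- For a real (or rational) skew-symmetric matrix `B`, `det (1 + B) ≠ 0`. -/
private lemma skew_det_ne_zero {F : Type*} [Field F] [LinearOrder F] [IsStrictOrderedRing F] {N : ℕ}
    {B : Matrix (Fin N) (Fin N) F} (hB : Bᵀ = -B) : (1 + B).det ≠ 0 := by
  intro h
  obtain ⟨v, hv, hmv⟩ := (Matrix.exists_mulVec_eq_zero_iff).mpr h
  have h2 : v ⬝ᵥ (B *ᵥ v) = 0 := by
    have ha : v ⬝ᵥ (B *ᵥ v) = (Bᵀ *ᵥ v) ⬝ᵥ v := by
      rw [Matrix.dotProduct_mulVec, ← Matrix.mulVec_transpose]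
    rw [hB, Matrix.neg_mulVec, neg_dotProduct] at ha
    have hc : (B *ᵥ v) ⬝ᵥ v = v ⬝ᵥ (B *ᵥ v) := dotProduct_comm _ _
    rw [hc] at ha
    linarith
  have h1 : v ⬝ᵥ ((1 + B) *ᵥ v) = 0 := by rw [hmv, dotProduct_zero]
  rw [Matrix.add_mulVec, Matrix.one_mulVec, dotProduct_add, h2, add_zero] at h1
  exact hv (dotProduct_self_eq_zero.mp h1)

/-- Cayley transform of a skew matrix is special orthogonal. -/
private lemma cayley_spec {F : Type*} [Field F] [LinearOrder F] [IsStrictOrderedRing F] {N : ℕ}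
    {B : Matrix (Fin N) (Fin N) F} (hB : Bᵀ = -B) :
    (((1 - B) * (1 + B)⁻¹)ᵀ) * ((1 - B) * (1 + B)⁻¹) = 1 ∧
      ((1 - B) * (1 + B)⁻¹).det = 1 := by
  have h1 : (1 + B).det ≠ 0 := skew_det_ne_zero hB
  have h1u : IsUnit (1 + B).det := h1.isUnit
  have ht : (1 + B)ᵀ = 1 - B := by
    rw [Matrix.transpose_add, Matrix.transpose_one, hB, sub_eq_add_neg]
  have ht2 : (1 - B)ᵀ = 1 + B := by
    rw [Matrix.transpose_sub, Matrix.transpose_one, hB, sub_neg_eq_add]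
  have h2 : (1 - B).det ≠ 0 := by rw [← ht, Matrix.det_transpose]; exact h1
  have h2u : IsUnit (1 - B).det := h2.isUnit
  have hcomm : (1 + B) * (1 - B) = (1 - B) * (1 + B) := by noncomm_ring
  constructor
  · rw [Matrix.transpose_mul, Matrix.transpose_nonsing_inv, ht, ht2]
    have step : (1 + B) * ((1 - B) * (1 + B)⁻¹) = 1 - B := by
      rw [← Matrix.mul_assoc, hcomm, Matrix.mul_assoc, Matrix.mul_nonsing_inv _ h1u, mul_one]
    calc (1 - B)⁻¹ * (1 + B) * ((1 - B) * (1 + B)⁻¹)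
        = (1 - B)⁻¹ * ((1 + B) * ((1 - B) * (1 + B)⁻¹)) := by rw [Matrix.mul_assoc]
      _ = (1 - B)⁻¹ * (1 - B) := by rw [step]
      _ = 1 := Matrix.nonsing_inv_mul _ h2u
  · rw [Matrix.det_mul, Matrix.det_nonsing_inv]
    have : (1 - B).det = (1 + B).det := by rw [← ht, Matrix.det_transpose]
    rw [this, Ring.inverse_eq_inv', mul_inv_cancel₀ h1]

/-- Inverse Cayley transform: skew-symmetry and the fact that it recovers `Q`. -/
private lemma inv_cayley {F : Type*} [Field F] [LinearOrder F] [IsStrictOrderedRing F] {N : ℕ}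
    {Q : Matrix (Fin N) (Fin N) F} (hQ : Qᵀ * Q = 1) (hd : (1 + Q).det ≠ 0) :
    ((1 - Q) * (1 + Q)⁻¹)ᵀ = -((1 - Q) * (1 + Q)⁻¹) ∧
      (1 - (1 - Q) * (1 + Q)⁻¹) * (1 + (1 - Q) * (1 + Q)⁻¹)⁻¹ = Q := by
  set A := (1 - Q) * (1 + Q)⁻¹ with hA
  have hdu : IsUnit (1 + Q).det := hd.isUnit
  have htadd : (1 + Q)ᵀ = 1 + Qᵀ := by rw [Matrix.transpose_add, Matrix.transpose_one]
  have hdT : (1 + Qᵀ).det ≠ 0 := by rw [← htadd, Matrix.det_transpose]; exact hd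
  have hdTu : IsUnit (1 + Qᵀ).det := hdT.isUnit
  have hAT : Aᵀ = (1 + Qᵀ)⁻¹ * (1 - Qᵀ) := by
    rw [hA, Matrix.transpose_mul, Matrix.transpose_nonsing_inv, htadd,
      Matrix.transpose_sub, Matrix.transpose_one]
  have e1 : (1 + Qᵀ) * Aᵀ * (1 + Q) = Q - Qᵀ := by
    rw [hAT, ← Matrix.mul_assoc, Matrix.mul_nonsing_inv _ hdTu, Matrix.one_mul]
    have : (1 - Qᵀ) * (1 + Q) = 1 + Q - Qᵀ - Qᵀ * Q := by noncomm_ring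
    rw [this, hQ]
    abel
  have e2 : (1 + Qᵀ) * A * (1 + Q) = Qᵀ - Q := by
    rw [Matrix.mul_assoc, hA, Matrix.nonsing_inv_mul_cancel_right _ _ hdu]
    have : (1 + Qᵀ) * (1 - Q) = 1 - Q + Qᵀ - Qᵀ * Q := by noncomm_ring
    rw [this, hQ]
    abel
  have e3 : (1 + Qᵀ) * (Aᵀ + A) * (1 + Q) = 0 := by
    have : (1 + Qᵀ) * (Aᵀ + A) * (1 + Q)
        = (1 + Qᵀ) * Aᵀ * (1 + Q) + (1 + Qᵀ) * A * (1 + Q) := by noncomm_ring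
    rw [this, e1, e2]
    abel
  have hskew : Aᵀ = -A := by
    have h4 : Aᵀ + A = (1 + Qᵀ)⁻¹ * ((1 + Qᵀ) * (Aᵀ + A) * (1 + Q)) * (1 + Q)⁻¹ := by
      rw [Matrix.mul_assoc (1 + Qᵀ) (Aᵀ + A) (1 + Q),
        Matrix.nonsing_inv_mul_cancel_left _ _ hdTu,
        Matrix.mul_nonsing_inv_cancel_right _ _ hdu]
    rw [e3, Matrix.mul_zero, Matrix.zero_mul] at h4
    linear_combination (norm := noncomm_ring) h4
  refine ⟨hskew, ?_⟩
  have hkey : ∀ X : Matrix (Fin N) (Fin N) F,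
      (((2:F) • X) * (1 + Q)⁻¹) * ((2:F)⁻¹ • (1 + Q)) = X := by
    intro X
    rw [Matrix.smul_mul, Matrix.smul_mul, Matrix.mul_smul, smul_smul,
      mul_inv_cancel₀ (two_ne_zero), one_smul,
      Matrix.nonsing_inv_mul_cancel_right _ _ hdu]
  have h1A : 1 + A = ((1 + Q) + (1 - Q)) * (1 + Q)⁻¹ := by
    rw [Matrix.add_mul, Matrix.mul_nonsing_inv _ hdu, hA]
  have h1mA : 1 - A = ((1 + Q) - (1 - Q)) * (1 + Q)⁻¹ := by
    rw [Matrix.sub_mul, Matrix.mul_nonsing_inv _ hdu, hA]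
  have hsum : (1 + Q) + (1 - Q) = (2:F) • (1 : Matrix (Fin N) (Fin N) F) := by
    rw [two_smul]; abel
  have hdiff : (1 + Q) - (1 - Q) = (2:F) • Q := by
    rw [two_smul]; abel
  have hinv2 : (1 + A)⁻¹ = (2:F)⁻¹ • (1 + Q) := by
    apply Matrix.inv_eq_right_inv
    rw [h1A, hsum]
    exact hkey 1
  rw [h1mA, hdiff, hinv2]
  exact hkey Q

end Aux

/-- The rational rotations `SO(N; ℚ)` are dense in `SO(N)`
(with respect to the Euclidean (Frobenius) matrix norm). -/
theorem rational_rotations_dense (N : ℕ) (S : Matrix (Fin N) (Fin N) ℝ)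
    (hS : S.transpose * S = 1) (hdet : S.det = 1)
    (ε : ℝ) (hε : 0 < ε) :
    ∃ R : Matrix (Fin N) (Fin N) ℝ,
      R.transpose * R = 1 ∧ R.det = 1 ∧ (∀ i j, ∃ q : ℚ, R i j = q) ∧
      Real.sqrt (∑ i, ∑ j, (R i j - S i j) ^ 2) < ε := by
  classical
  have hdetS : S.det ≠ 0 := by rw [hdet]; exact one_ne_zero
  obtain ⟨d, hdsign, hDS⟩ := exists_sign_diag S hdetS
  set Dm : Matrix (Fin N) (Fin N) ℝ := Matrix.diagonal d with hDm
  have hDmT : Dmᵀ = Dm := Matrix.diagonal_transpose d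
  have hDD : Dm * Dm = 1 := by
    rw [hDm, Matrix.diagonal_mul_diagonal]
    have hdd : (fun i => d i * d i) = fun _ => (1:ℝ) := funext fun i => by
      rcases hdsign i with h | h <;> simp [h]
    rw [hdd, Matrix.diagonal_one]
  set Q := Dm * S with hQdef
  have hQorth : Qᵀ * Q = 1 := by
    rw [hQdef, Matrix.transpose_mul, hDmT, Matrix.mul_assoc, ← Matrix.mul_assoc Dm Dm S,
      hDD, Matrix.one_mul, hS]
  have hQ1det : (1 + Q).det ≠ 0 := by
    have h1 : 1 + Q = Dm * (Dm + S) := by rw [Matrix.mul_add, hDD, hQdef]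
    rw [h1, Matrix.det_mul]
    have hDmdet : Dm.det ≠ 0 := by
      rw [hDm, Matrix.det_diagonal]
      exact Finset.prod_ne_zero_iff.mpr fun i _ => by
        rcases hdsign i with h | h <;> simp [h]
    have h2 : (Dm + S).det ≠ 0 := by rwa [add_comm] at hDS
    exact mul_ne_zero hDmdet h2
  obtain ⟨hAskew, hAQ⟩ := inv_cayley hQorth hQ1det
  set A := (1 - Q) * (1 + Q)⁻¹ with hAdef
  have hQdet1 : Q.det = 1 := by rw [← hAQ]; exact (cayley_spec hAskew).2
  have hDmdet1 : Dm.det = 1 := by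
    have h := hQdet1
    rwa [hQdef, Matrix.det_mul, hdet, mul_one] at h
  have hA1 : (1 + A).det ≠ 0 := skew_det_ne_zero hAskew
  set f : Matrix (Fin N) (Fin N) ℝ → Matrix (Fin N) (Fin N) ℝ :=
    fun M => Dm * ((1 - M) * (1 + M)⁻¹) with hf
  have hfA : f A = S := by
    show Dm * ((1 - A) * (1 + A)⁻¹) = S
    rw [hAQ, hQdef, ← Matrix.mul_assoc, hDD, Matrix.one_mul]
  have hcont : ContinuousAt f A := by
    have hinv : ContinuousAt (fun M : Matrix (Fin N) (Fin N) ℝ => (1 + M)⁻¹) A := by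
      refine ContinuousAt.comp (continuousAt_matrix_inv (1 + A) ?_)
        ((continuous_const.add continuous_id).continuousAt)
      rw [Ring.inverse_eq_inv']
      exact continuousAt_inv₀ hA1
    exact continuousAt_const.mul (((continuous_const.sub continuous_id).continuousAt).mul hinv)
  set ε' := ε / (N + 1) with hε'
  have hε'pos : 0 < ε' := by positivity
  -- move to the Pi-type (definitionally equal) to use the metric space structure
  have hcontF : ContinuousAt
      (fun v : Fin N → Fin N → ℝ => (show Fin N → Fin N → ℝ from f (Matrix.of v)))
      (show Fin N → Fin N → ℝ from A) := hcont
  have hmem := hcontF.preimage_mem_nhds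
    (Metric.ball_mem_nhds (show Fin N → Fin N → ℝ from f A) hε'pos)
  obtain ⟨δ, hδpos, hδsub⟩ := Metric.mem_nhds_iff.mp hmem
  have hrat : ∀ i j, ∃ q : ℚ, |A i j - (q:ℝ)| < δ / 2 := fun i j =>
    exists_rat_near _ (by positivity)
  choose qm hqm using hrat
  set Bq : Matrix (Fin N) (Fin N) ℚ :=
    Matrix.of (fun i j => (qm i j - qm j i) / 2) with hBq
  have hBqskew : Bqᵀ = -Bq := by
    ext i j
    simp [hBq, Matrix.transpose_apply]
    ring
  set c : ℚ →+* ℝ := Rat.castHom ℝ with hc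
  set B : Matrix (Fin N) (Fin N) ℝ := Bq.map c with hB
  have hdistBA : dist (show Fin N → Fin N → ℝ from B) (show Fin N → Fin N → ℝ from A) < δ := by
    rw [dist_pi_lt_iff hδpos]
    intro i
    rw [dist_pi_lt_iff hδpos]
    intro j
    rw [Real.dist_eq]
    have h1 := hqm i j
    have h2 := hqm j i
    have hAji : A j i = - A i j := by
      have := congrFun (congrFun hAskew i) j
      simpa [Matrix.transpose_apply, Matrix.neg_apply] using this
    have hBij : B i j = (((qm i j : ℝ)) - ((qm j i : ℝ))) / 2 := by
      simp only [hB, hBq, Matrix.map_apply, Matrix.of_apply, hc, Rat.coe_castHom]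
      push_cast
      ring
    show |B i j - A i j| < δ
    rw [hBij]
    have hre : ((qm i j : ℝ) - (qm j i : ℝ)) / 2 - A i j
        = ((A i j - (qm i j:ℝ)) - (A j i - (qm j i:ℝ))) / (-2) := by
      rw [hAji]; ring
    rw [hre, abs_div]
    have habs : |(A i j - (qm i j:ℝ)) - (A j i - (qm j i:ℝ))|
        ≤ |A i j - (qm i j:ℝ)| + |A j i - (qm j i:ℝ)| := abs_sub _ _
    have h2abs : |(-2 : ℝ)| = 2 := by norm_num
    rw [h2abs]
    linarith
  have hfB : dist (show Fin N → Fin N → ℝ from f B) (show Fin N → Fin N → ℝ from S) < ε' := by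
    have hBmem : (show Fin N → Fin N → ℝ from B) ∈ Metric.ball (show Fin N → Fin N → ℝ from A) δ :=
      Metric.mem_ball.mpr hdistBA
    have hsub := hδsub hBmem
    rw [Set.mem_preimage, Metric.mem_ball] at hsub
    have heq : (show Fin N → Fin N → ℝ from f A) = (show Fin N → Fin N → ℝ from S) := hfA
    rw [← heq]
    exact hsub
  -- rational side
  have hBqdet : (1 + Bq).det ≠ 0 := skew_det_ne_zero hBqskew
  obtain ⟨hCqorth, hCqdet⟩ := cayley_spec hBqskew
  set Cq := (1 - Bq) * (1 + Bq)⁻¹ with hCq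
  set dq : Fin N → ℚ := fun i => if d i = 1 then 1 else -1 with hdq
  set Dq : Matrix (Fin N) (Fin N) ℚ := Matrix.diagonal dq with hDq
  have hDqmap : Dq.map c = Dm := by
    ext i j
    by_cases h : i = j
    · subst h
      simp only [hDq, hDm, Matrix.map_apply, Matrix.diagonal_apply_eq, hdq, hc]
      rcases hdsign i with h' | h' <;> norm_num [h']
    · simp [hDq, hDm, Matrix.map_apply, Matrix.diagonal_apply_ne _ h, hc]
  set Rq := Dq * Cq with hRq
  have hcast1 : (1 + Bq).map c = 1 + B := by
    rw [Matrix.map_add c (fun a b => map_add c a b), Matrix.map_one c (map_zero c) (map_one c), hB]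
  have hcast2 : (1 - Bq).map c = 1 - B := by
    rw [Matrix.map_sub c (fun a b => map_sub c a b), Matrix.map_one c (map_zero c) (map_one c), hB]
  have hmapinv : ((1 + Bq)⁻¹).map c = (1 + B)⁻¹ := by
    symm
    apply Matrix.inv_eq_right_inv
    rw [← hcast1, ← Matrix.map_mul,
      Matrix.mul_nonsing_inv _ hBqdet.isUnit, Matrix.map_one c (map_zero c) (map_one c)]
  have hRmap : Rq.map c = f B := by
    show Rq.map c = Dm * ((1 - B) * (1 + B)⁻¹)
    rw [hRq, Matrix.map_mul, hDqmap, hCq, Matrix.map_mul, hcast2, hmapinv]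
  have hDqT : Dqᵀ = Dq := Matrix.diagonal_transpose dq
  have hDqDq : Dq * Dq = 1 := by
    rw [hDq, Matrix.diagonal_mul_diagonal]
    have hdd : (fun i => dq i * dq i) = fun _ => (1:ℚ) := funext fun i => by
      by_cases h : d i = 1 <;> simp [hdq, h]
    rw [hdd, Matrix.diagonal_one]
  have hRqorth : Rqᵀ * Rq = 1 := by
    rw [hRq, Matrix.transpose_mul, hDqT, Matrix.mul_assoc, ← Matrix.mul_assoc Dq Dq Cq,
      hDqDq, Matrix.one_mul, hCqorth]
  have hDqdet : Dq.det = 1 := by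
    have h1 : c Dq.det = (1:ℝ) := by
      rw [RingHom.map_det, RingHom.mapMatrix_apply, hDqmap, hDmdet1]
    have h2 : ((Dq.det : ℚ) : ℝ) = 1 := h1
    exact_mod_cast h2
  have hRqdet : Rq.det = 1 := by
    rw [hRq, Matrix.det_mul, hDqdet, hCqdet, mul_one]
  refine ⟨Rq.map c, ?_, ?_, ?_, ?_⟩
  · rw [← Matrix.transpose_map, ← Matrix.map_mul, hRqorth,
      Matrix.map_one c (map_zero c) (map_one c)]
  · rw [← RingHom.mapMatrix_apply, ← RingHom.map_det, hRqdet, _root_.map_one]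
  · intro i j
    exact ⟨Rq i j, rfl⟩
  · set R := Rq.map c with hR
    have hRfB : R = f B := hRmap
    have hentry : ∀ i j, |R i j - S i j| ≤ ε' := by
      intro i j
      have h1 : dist ((show Fin N → Fin N → ℝ from f B) i j)
          ((show Fin N → Fin N → ℝ from S) i j)
            ≤ dist ((show Fin N → Fin N → ℝ from f B) i) ((show Fin N → Fin N → ℝ from S) i) :=
        dist_le_pi_dist _ _ j
      have h2 : dist ((show Fin N → Fin N → ℝ from f B) i) ((show Fin N → Fin N → ℝ from S) i)
          ≤ dist (show Fin N → Fin N → ℝ from f B) (show Fin N → Fin N → ℝ from S) :=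
        dist_le_pi_dist _ _ i
      have h3 : |f B i j - S i j| ≤ ε' := by
        have := le_trans h1 h2
        rw [Real.dist_eq] at this
        exact le_trans this (le_of_lt hfB)
      rw [hRfB]
      exact h3
    rw [Real.sqrt_lt' hε]
    have hbound : ∀ i j, (R i j - S i j) ^ 2 ≤ ε' ^ 2 := by
      intro i j
      have := hentry i j
      have habs := abs_le.mp this
      nlinarith [habs.1, habs.2]
    have hsum1 : ∀ i, (∑ j, (R i j - S i j) ^ 2) ≤ (N : ℝ) * ε' ^ 2 := by
      intro i
      calc (∑ j, (R i j - S i j) ^ 2) ≤ ∑ _j : Fin N, ε' ^ 2 :=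
            Finset.sum_le_sum fun j _ => hbound i j
        _ = (N : ℝ) * ε' ^ 2 := by simp [Finset.sum_const, nsmul_eq_mul]
    have hsum2 : (∑ i, ∑ j, (R i j - S i j) ^ 2) ≤ (N : ℝ) * ((N : ℝ) * ε' ^ 2) := by
      calc (∑ i, ∑ j, (R i j - S i j) ^ 2) ≤ ∑ _i : Fin N, (N : ℝ) * ε' ^ 2 :=
            Finset.sum_le_sum fun i _ => hsum1 i
        _ = (N : ℝ) * ((N : ℝ) * ε' ^ 2) := by simp [Finset.sum_const, nsmul_eq_mul]
    have hfinal : (N : ℝ) * ((N : ℝ) * ε' ^ 2) < ε ^ 2 := by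
      have hN1 : (0:ℝ) < ((N:ℝ) + 1) ^ 2 := by positivity
      have hε2 : (0:ℝ) < ε ^ 2 := by positivity
      have key : (N : ℝ) * ((N : ℝ) * ε' ^ 2) = (N:ℝ)^2 / ((N:ℝ)+1)^2 * ε^2 := by
        rw [hε', div_pow]
        ring
      have hlt : (N:ℝ)^2 / ((N:ℝ)+1)^2 < 1 := by
        rw [div_lt_one hN1]
        nlinarith [Nat.cast_nonneg (α := ℝ) N]
      calc (N : ℝ) * ((N : ℝ) * ε' ^ 2) = (N:ℝ)^2/((N:ℝ)+1)^2 * ε^2 := key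
        _ < 1 * ε^2 := mul_lt_mul_of_pos_right hlt hε2
        _ = ε^2 := one_mul _
    linarith
end

section
/- Let ε > 0, let ν ∈ ℚ^N ∩ S^{N-1}, and let S ∈ SO(N) be a rotation with S e_N = ν. Then there exists a rotation R ∈ SO(N) with R e_i ∈ ℚ^N for all i, such that R e_N = ν and ‖R − S‖ < ε. -/
open Matrix

private lemma det_updateRow_single {m : ℕ} (M : Matrix (Fin (m+1)) (Fin (m+1)) ℝ) :
    (M.updateRow 0 (Pi.single 0 1)).det = (M.submatrix Fin.succ Fin.succ).det := by
  rw [Matrix.det_succ_row_zero]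
  rw [Finset.sum_eq_single 0]
  · have h1 : (M.updateRow 0 (Pi.single 0 1)).submatrix Fin.succ ((0 : Fin (m+1)).succAbove)
        = M.submatrix Fin.succ Fin.succ := by
      ext i j
      simp [Matrix.updateRow_apply, Fin.succ_ne_zero, Fin.zero_succAbove]
    rw [h1]
    simp
  · intro b _ hb
    simp [Matrix.updateRow_apply, Pi.single_apply, hb.symm]
  · simp

private lemma exists_sign_diagonal : ∀ (m : ℕ) (A : Matrix (Fin m) (Fin m) ℝ),
    ∃ d : Fin m → ℝ, (∀ i, d i = 1 ∨ d i = -1) ∧ (A + Matrix.diagonal d).det ≠ 0 := by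
  intro m
  induction m with
  | zero => exact fun A => ⟨fun i => 1, fun i => i.elim0, by simp [Matrix.det_isEmpty]⟩
  | succ m ih =>
    intro A
    obtain ⟨d₀, hd₀, hdet₀⟩ := ih (A.submatrix Fin.succ Fin.succ)
    have key : ∀ s : ℝ, (A + Matrix.diagonal (Fin.cases s d₀)).det
        = ((A + Matrix.diagonal (Fin.cases 0 d₀)).det)
          + s * ((A.submatrix Fin.succ Fin.succ) + Matrix.diagonal d₀).det := by
      intro s
      have hM : A + Matrix.diagonal (Fin.cases s d₀)
          = Matrix.updateRow (A + Matrix.diagonal (Fin.cases 0 d₀)) 0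
              ((A + Matrix.diagonal (Fin.cases (0:ℝ) d₀)) 0
                + s • (Pi.single 0 1 : Fin (m+1) → ℝ)) := by
        ext i j
        rcases eq_or_ne i 0 with rfl | hi
        · rcases eq_or_ne (0 : Fin (m+1)) j with rfl | hj
          · simp [Matrix.diagonal_apply]
          · simp [Matrix.diagonal_apply, hj, Pi.single_apply, Ne.symm hj]
        · rcases Fin.eq_zero_or_eq_succ i with rfl | ⟨k, rfl⟩
          · exact absurd rfl hi
          · rcases eq_or_ne (Fin.succ k) j with rfl | hij
            · simp [Matrix.updateRow_apply, hi, Matrix.diagonal_apply]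
            · simp [Matrix.updateRow_apply, hi, Matrix.diagonal_apply, hij]
      have hsub : (A + Matrix.diagonal (Fin.cases (0:ℝ) d₀)).submatrix Fin.succ Fin.succ
          = A.submatrix Fin.succ Fin.succ + Matrix.diagonal d₀ := by
        ext i j
        rcases eq_or_ne i j with rfl | hij
        · simp [Matrix.diagonal_apply]
        · simp [Matrix.diagonal_apply, hij, fun h => hij (Fin.succ_inj.mp h)]
      rw [hM, Matrix.det_updateRow_add, Matrix.updateRow_eq_self,
        Matrix.det_updateRow_smul, det_updateRow_single, hsub]
    rcases eq_or_ne ((A + Matrix.diagonal (Fin.cases (1:ℝ) d₀)).det) 0 with h1 | h1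
    · refine ⟨Fin.cases (-1) d₀, ?_, ?_⟩
      · intro i
        rcases Fin.eq_zero_or_eq_succ i with rfl | ⟨k, rfl⟩
        · right; simp
        · simpa using hd₀ k
      · have h1' := key 1
        have h2' := key (-1)
        rw [h1] at h1'
        intro h
        rw [h] at h2'
        exact hdet₀ (by linarith)
    · refine ⟨Fin.cases 1 d₀, ?_, h1⟩
      intro i
      rcases Fin.eq_zero_or_eq_succ i with rfl | ⟨k, rfl⟩
      · left; simp
      · simpa using hd₀ k
set_option linter.unusedSectionVars false

open Matrix

variable {k : Type*} [Fintype k] [DecidableEq k]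

private lemma skew_det_one_add_ne_zero {B : Matrix k k ℝ} (hB : Bᵀ = -B) :
    (1 + B).det ≠ 0 := by
  intro h
  obtain ⟨v, hv, hmul⟩ := (Matrix.exists_mulVec_eq_zero_iff).mpr h
  have h1 : v + B.mulVec v = 0 := by
    simpa [Matrix.add_mulVec, Matrix.one_mulVec] using hmul
  have h2 : v ⬝ᵥ B.mulVec v = 0 := by
    have e1 : v ⬝ᵥ B.mulVec v = (v ᵥ* B) ⬝ᵥ v := Matrix.dotProduct_mulVec v B v
    have e2 : v ᵥ* B = -(B.mulVec v) := by
      rw [← Matrix.mulVec_transpose, hB, Matrix.neg_mulVec]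
    have e3 : v ⬝ᵥ B.mulVec v = -(v ⬝ᵥ B.mulVec v) := by
      conv_lhs => rw [e1, e2, neg_dotProduct, dotProduct_comm]
    linarith
  have h3 : v ⬝ᵥ v = 0 := by
    have := congrArg (fun w => dotProduct v w) h1
    simpa [dotProduct_add, h2] using this
  exact hv (dotProduct_self_eq_zero.mp h3)

/-- Cayley transform of a skew matrix is orthogonal with det 1. -/
private lemma cayley_orthogonal {B : Matrix k k ℝ} (hB : Bᵀ = -B) :
    ((1 - B) * (1 + B)⁻¹)ᵀ * ((1 - B) * (1 + B)⁻¹) = 1 ∧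
    ((1 - B) * (1 + B)⁻¹).det = 1 := by
  have hdet : IsUnit (1 + B).det := (skew_det_one_add_ne_zero hB).isUnit
  have hBneg : (-B)ᵀ = -(-B) := by rw [transpose_neg, hB, neg_neg]
  have hdet' : IsUnit (1 - B).det := by
    have := skew_det_one_add_ne_zero hBneg
    simpa [sub_eq_add_neg] using this.isUnit
  have htr : (1 + B)ᵀ = 1 - B := by rw [transpose_add, transpose_one, hB, sub_eq_add_neg]
  have htr' : (1 - B)ᵀ = 1 + B := by rw [transpose_sub, transpose_one, hB, sub_neg_eq_add]
  have hcomm : (1 + B) * (1 - B) = (1 - B) * (1 + B) := by noncomm_ring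
  constructor
  · rw [transpose_mul, transpose_nonsing_inv, htr, htr']
    calc (1 - B)⁻¹ * (1 + B) * ((1 - B) * (1 + B)⁻¹)
        = (1 - B)⁻¹ * ((1 + B) * (1 - B)) * (1 + B)⁻¹ := by
          simp only [Matrix.mul_assoc]
      _ = (1 - B)⁻¹ * ((1 - B) * (1 + B)) * (1 + B)⁻¹ := by rw [hcomm]
      _ = ((1 - B)⁻¹ * (1 - B)) * ((1 + B) * (1 + B)⁻¹) := by
          simp only [Matrix.mul_assoc]
      _ = 1 := by rw [Matrix.nonsing_inv_mul _ hdet', Matrix.mul_nonsing_inv _ hdet]; simp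
  · rw [Matrix.det_mul, Matrix.det_nonsing_inv, ← htr, Matrix.det_transpose,
      Ring.inverse_eq_inv]
    exact mul_inv_cancel₀ (skew_det_one_add_ne_zero hB)

private lemma inv_mul_comm' {A C : Matrix k k ℝ} (h : IsUnit A.det) (hc : A * C = C * A) :
    A⁻¹ * C = C * A⁻¹ := by
  calc A⁻¹ * C = A⁻¹ * C * (A * A⁻¹) := by rw [Matrix.mul_nonsing_inv _ h, Matrix.mul_one]
    _ = A⁻¹ * ((C * A) * A⁻¹) := by simp only [Matrix.mul_assoc]
    _ = A⁻¹ * ((A * C) * A⁻¹) := by rw [hc]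
    _ = (A⁻¹ * A) * (C * A⁻¹) := by simp only [Matrix.mul_assoc]
    _ = C * A⁻¹ := by rw [Matrix.nonsing_inv_mul _ h, Matrix.one_mul]

private lemma cayley_inverse {T : Matrix k k ℝ} (hT : Tᵀ * T = 1)
    (hdetT : (1 + T).det ≠ 0) :
    ∃ B : Matrix k k ℝ, Bᵀ = -B ∧ (1 - B) * (1 + B)⁻¹ = T := by
  have hdet : IsUnit (1 + T).det := hdetT.isUnit
  set B := (1 - T) * (1 + T)⁻¹ with hBdef
  have hTd : IsUnit T.det := by
    have := congrArg Matrix.det hT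
    rw [Matrix.det_mul, Matrix.det_transpose, Matrix.det_one] at this
    exact IsUnit.of_mul_eq_one _ this
  have hTtd : IsUnit Tᵀ.det := by rwa [Matrix.det_transpose]
  -- skewness
  have hskew : Bᵀ = -B := by
    have e1 : (1 + Tᵀ) = Tᵀ * (1 + T) := by rw [Matrix.mul_add, Matrix.mul_one, hT]; abel
    have e2 : (1 - Tᵀ) = Tᵀ * (T - 1) := by rw [Matrix.mul_sub, Matrix.mul_one, hT]
    have e3 : Bᵀ = ((1 + T)ᵀ)⁻¹ * (1 - Tᵀ) := by
      rw [hBdef, Matrix.transpose_mul, Matrix.transpose_nonsing_inv, Matrix.transpose_sub,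
        Matrix.transpose_one]
    rw [e3, Matrix.transpose_add, Matrix.transpose_one, e1, e2, Matrix.mul_inv_rev]
    have e4 : (Tᵀ)⁻¹ * (Tᵀ * (T - 1)) = T - 1 := by
      rw [← Matrix.mul_assoc, Matrix.nonsing_inv_mul _ hTtd, Matrix.one_mul]
    rw [Matrix.mul_assoc, e4]
    have e5 : (1 + T) * (T - 1) = (T - 1) * (1 + T) := by noncomm_ring
    rw [inv_mul_comm' hdet e5, ← Matrix.neg_mul]
    congr 1
    abel
  have hBmul : B * (1 + T) = 1 - T := by
    rw [hBdef, Matrix.mul_assoc, Matrix.nonsing_inv_mul _ hdet, Matrix.mul_one]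
  have hTB : T * (1 + B) = 1 - B := by
    have h6 : T * (1 + B) * (1 + T) = (1 - B) * (1 + T) := by
      have l : T * (1 + B) * (1 + T) = T * (1 + T) + T * (B * (1 + T)) := by
        noncomm_ring
      have r : (1 - B) * (1 + T) = (1 + T) - B * (1 + T) := by noncomm_ring
      rw [l, r, hBmul]
      noncomm_ring
    have := congrArg (fun X => X * (1 + T)⁻¹) h6
    simpa [Matrix.mul_assoc, Matrix.mul_nonsing_inv _ hdet] using this
  have hdetB := skew_det_one_add_ne_zero hskew
  refine ⟨B, hskew, ?_⟩
  rw [← hTB, Matrix.mul_assoc, Matrix.mul_nonsing_inv _ hdetB.isUnit, Matrix.mul_one]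

private def RatMat (A : Matrix k k ℝ) : Prop := ∃ Q : Matrix k k ℚ, A = Q.map ((↑) : ℚ → ℝ)

private lemma ratMat_inv {A : Matrix k k ℝ} (h : RatMat A) : RatMat A⁻¹ := by
  obtain ⟨Q, rfl⟩ := h
  refine ⟨Q⁻¹, ?_⟩
  have hdet : (Q.map ((↑) : ℚ → ℝ)).det = ((Q.det : ℚ) : ℝ) := by
    have := RingHom.map_det (Rat.castHom ℝ) Q
    simp only [RingHom.mapMatrix_apply] at this
    exact this.symm
  have hadj : (Q.map ((↑) : ℚ → ℝ)).adjugate = Q.adjugate.map ((↑) : ℚ → ℝ) := by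
    have := RingHom.map_adjugate (Rat.castHom ℝ) Q
    simp only [RingHom.mapMatrix_apply] at this
    exact this.symm
  rw [Matrix.inv_def, Matrix.inv_def, hdet, hadj]
  ext i j
  simp only [Ring.inverse_eq_inv', Matrix.smul_apply, Matrix.map_apply, smul_eq_mul]
  push_cast
  ring

private lemma ratMat_mul {A B : Matrix k k ℝ} (hA : RatMat A) (hB : RatMat B) :
    RatMat (A * B) := by
  obtain ⟨Q, rfl⟩ := hA
  obtain ⟨P, rfl⟩ := hB
  refine ⟨Q * P, ?_⟩
  ext i j
  simp [Matrix.mul_apply, Matrix.map_apply]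

private lemma ratMat_sub {A B : Matrix k k ℝ} (hA : RatMat A) (hB : RatMat B) :
    RatMat (A - B) := by
  obtain ⟨Q, rfl⟩ := hA
  obtain ⟨P, rfl⟩ := hB
  exact ⟨Q - P, by ext i j; simp [Matrix.map_apply]⟩

private lemma ratMat_add {A B : Matrix k k ℝ} (hA : RatMat A) (hB : RatMat B) :
    RatMat (A + B) := by
  obtain ⟨Q, rfl⟩ := hA
  obtain ⟨P, rfl⟩ := hB
  exact ⟨Q + P, by ext i j; simp⟩

private lemma ratMat_one : RatMat (1 : Matrix k k ℝ) :=
  ⟨1, by ext i j; simp [Matrix.one_apply]; split <;> simp⟩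

private lemma exists_rat_skew_near {B : Matrix k k ℝ} (hB : Bᵀ = -B) {δ : ℝ} (hδ : 0 < δ) :
    ∃ B' : Matrix k k ℝ, B'ᵀ = -B' ∧ RatMat B' ∧ ∀ i j, |B' i j - B i j| < δ := by
  have h4 : 0 < δ/4 := by linarith
  choose q hq using fun p : k × k => exists_rat_near (B p.1 p.2 / 2) h4
  set Q : Matrix k k ℚ := fun i j => q (i, j) with hQ
  refine ⟨(Q - Qᵀ).map ((↑) : ℚ → ℝ), ?_, ⟨Q - Qᵀ, rfl⟩, ?_⟩
  · ext i j
    simp only [Matrix.map_apply, Matrix.transpose_apply, Matrix.sub_apply, Matrix.neg_apply,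
      Rat.cast_sub]
    ring
  · intro i j
    have hij := hq (i, j)
    have hji := hq (j, i)
    have hBji : B j i = -(B i j) := by
      have := congrFun (congrFun hB i) j
      simp only [Matrix.transpose_apply, Matrix.neg_apply] at this
      linarith
    rw [hBji] at hji
    simp only [Matrix.map_apply, Matrix.sub_apply, Matrix.transpose_apply, hQ, Rat.cast_sub]
    simp only [Pi.sub_apply, Rat.cast_sub] at hij hji ⊢
    show |((q (i, j) - q (j, i) : ℚ) : ℝ) - B i j| < δ
    rw [Rat.cast_sub]
    rw [abs_lt] at hij hji ⊢
    constructor <;> linarith [hij.1, hij.2, hji.1, hji.2]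

attribute [local instance] Matrix.seminormedAddCommGroup

private lemma cayley_rat_approx {B : Matrix k k ℝ} (hB : Bᵀ = -B) {δ : ℝ} (hδ : 0 < δ) :
    ∃ C' : Matrix k k ℝ, C'ᵀ * C' = 1 ∧ C'.det = 1 ∧ RatMat C' ∧
      ∀ i j, |C' i j - ((1 - B) * (1 + B)⁻¹) i j| < δ := by
  have hcont : ContinuousAt (fun X : Matrix k k ℝ => (1 - X) * (1 + X)⁻¹) B := by
    apply ContinuousAt.mul
    · exact (continuous_const.sub continuous_id).continuousAt
    · have h1 : ContinuousAt Inv.inv ((1 : Matrix k k ℝ) + B) := by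
        apply continuousAt_matrix_inv
        rw [Ring.inverse_eq_inv']
        exact continuousAt_inv₀ (skew_det_one_add_ne_zero hB)
      exact h1.comp ((continuous_const.add continuous_id).continuousAt)
  replace hcont := Metric.continuousAt_iff.mp hcont
  obtain ⟨δ₀, hδ₀, hball⟩ := hcont δ hδ
  obtain ⟨B', hB'skew, hB'rat, hB'near⟩ := exists_rat_skew_near hB hδ₀
  have hC := cayley_orthogonal hB'skew
  refine ⟨(1 - B') * (1 + B')⁻¹, hC.1, hC.2, ?_, ?_⟩
  · exact ratMat_mul (ratMat_sub ratMat_one hB'rat) (ratMat_inv (ratMat_add ratMat_one hB'rat))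
  · have hdist : dist B' B < δ₀ := by
      rw [dist_eq_norm, Matrix.norm_lt_iff hδ₀]
      intro i j
      simpa [Real.norm_eq_abs, Matrix.sub_apply] using hB'near i j
    have hb := hball hdist
    rw [dist_eq_norm] at hb
    intro i j
    have hentry : ‖((1 - B') * (1 + B')⁻¹ - (1 - B) * (1 + B)⁻¹) i j‖
        ≤ ‖(1 - B') * (1 + B')⁻¹ - (1 - B) * (1 + B)⁻¹‖ :=
      Matrix.norm_entry_le_entrywise_sup_norm _
    rw [Matrix.sub_apply, Real.norm_eq_abs] at hentry
    exact lt_of_le_of_lt hentry hb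

private lemma ratMat_sign_diagonal {m : ℕ} {d : Fin m → ℝ} (hd : ∀ i, d i = 1 ∨ d i = -1) :
    RatMat (Matrix.diagonal d) := by
  refine ⟨Matrix.diagonal (fun i => if d i = 1 then (1 : ℚ) else -1), ?_⟩
  ext i j
  rcases eq_or_ne i j with rfl | hij
  · simp only [Matrix.diagonal_apply_eq, Matrix.map_apply]
    rcases hd i with h | h <;> rw [h] <;> norm_num
  · simp [Matrix.diagonal_apply_ne _ hij, Matrix.map_apply]

private lemma orthogonal_rat_approx {m : ℕ} (T : Matrix (Fin m) (Fin m) ℝ)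
    (hT : Tᵀ * T = 1) {δ : ℝ} (hδ : 0 < δ) :
    ∃ T' : Matrix (Fin m) (Fin m) ℝ, T'ᵀ * T' = 1 ∧ T'.det = T.det ∧ RatMat T' ∧
      ∀ i j, |T' i j - T i j| < δ := by
  obtain ⟨d, hd, hdet⟩ := exists_sign_diagonal m T
  set D := Matrix.diagonal d with hD
  have hDD : D * D = 1 := by
    rw [hD, Matrix.diagonal_mul_diagonal]
    ext i j
    rcases eq_or_ne i j with rfl | hij
    · rcases hd i with h | h <;> simp [h, Matrix.one_apply]
    · simp [Matrix.diagonal_apply_ne _ hij, Matrix.one_apply, hij]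
  have hDT : Dᵀ = D := Matrix.diagonal_transpose d
  set U := D * T with hU
  have hUorth : Uᵀ * U = 1 := by
    rw [hU, Matrix.transpose_mul, hDT, Matrix.mul_assoc, ← Matrix.mul_assoc D D T, hDD,
      Matrix.one_mul, hT]
  have hTDU : D * U = T := by rw [hU, ← Matrix.mul_assoc, hDD, Matrix.one_mul]
  have hdetU : (1 + U).det ≠ 0 := by
    intro h
    apply hdet
    have : T + D = D * (1 + U) := by rw [Matrix.mul_add, Matrix.mul_one, hTDU]; abel
    rw [add_comm T D] at this ⊢
    rw [this, Matrix.det_mul, h, mul_zero]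
  obtain ⟨B, hBskew, hBC⟩ := cayley_inverse hUorth hdetU
  obtain ⟨C', hC'orth, hC'det, hC'rat, hC'near⟩ := cayley_rat_approx hBskew hδ
  rw [hBC] at hC'near
  have hdetUone : U.det = 1 := by
    rw [← hBC]
    exact (cayley_orthogonal hBskew).2
  refine ⟨D * C', ?_, ?_, ?_, ?_⟩
  · rw [Matrix.transpose_mul, hDT, Matrix.mul_assoc, ← Matrix.mul_assoc D D C', hDD,
      Matrix.one_mul, hC'orth]
  · rw [Matrix.det_mul, hC'det, mul_one, ← hTDU, Matrix.det_mul, hdetUone, mul_one]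
  · exact ratMat_mul (ratMat_sign_diagonal hd) hC'rat
  · intro i j
    have h1 : (D * C') i j = d i * C' i j := by
      rw [hD]; simp [Matrix.diagonal_mul]
    have h2 : T i j = d i * U i j := by
      rw [← hTDU, hD]; simp [Matrix.diagonal_mul]
    rw [h1, h2, ← mul_sub, abs_mul]
    have : |d i| = 1 := by rcases hd i with h | h <;> simp [h]
    rw [this, one_mul]
    exact hC'near i j

private lemma frob_eq_trace {A : Matrix k k ℝ} : ∑ i, ∑ j, (A i j)^2 = (Aᵀ * A).trace := by
  rw [Matrix.trace]
  rw [Finset.sum_comm]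
  apply Finset.sum_congr rfl
  intro j _
  simp [Matrix.diag, Matrix.mul_apply, sq]

private lemma frob_orth_invariant {M A : Matrix k k ℝ} (hM : Mᵀ * M = 1) :
    ∑ i, ∑ j, ((M * A) i j)^2 = ∑ i, ∑ j, (A i j)^2 := by
  rw [frob_eq_trace, frob_eq_trace]
  congr 1
  rw [Matrix.transpose_mul]
  calc Aᵀ * Mᵀ * (M * A) = Aᵀ * (Mᵀ * M) * A := by simp only [Matrix.mul_assoc]
    _ = Aᵀ * A := by rw [hM, Matrix.mul_one]

private lemma householder_exists {n : ℕ} (ν : Fin (n+1) → ℝ) (hrat : ∀ i, ∃ q : ℚ, ν i = q)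
    (hunit : ∑ i, ν i ^ 2 = 1) :
    ∃ M : Matrix (Fin (n+1)) (Fin (n+1)) ℝ, Mᵀ * M = 1 ∧ RatMat M ∧
      M.mulVec (Pi.single (Fin.last n) 1) = ν := by
  classical
  set e : Fin (n+1) → ℝ := Pi.single (Fin.last n) 1 with he
  by_cases hνe : ν = e
  · refine ⟨1, by simp, ratMat_one, ?_⟩
    rw [Matrix.one_mulVec]
    exact hνe.symm
  · set u : Fin (n+1) → ℝ := ν - e with hu
    set c : ℝ := ∑ i, u i ^ 2 with hc
    have hcne : c ≠ 0 := by
      intro h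
      apply hνe
      have hz : ∀ i, u i = 0 := by
        intro i
        have h1 : ∀ i ∈ Finset.univ, (0:ℝ) ≤ u i ^ 2 := fun i _ => sq_nonneg _
        have := (Finset.sum_eq_zero_iff_of_nonneg h1).mp h.symm.symm
        have h2 := this i (Finset.mem_univ i)
        exact pow_eq_zero_iff (by norm_num) |>.mp h2
      funext i
      have := hz i
      rw [hu] at this
      simpa [sub_eq_zero] using this
    set P : Matrix (Fin (n+1)) (Fin (n+1)) ℝ := Matrix.of fun i j => u i * u j with hP
    set M : Matrix (Fin (n+1)) (Fin (n+1)) ℝ := 1 - (2/c) • P with hM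
    have hPsymm : Pᵀ = P := by ext i j; simp [hP, mul_comm]
    have hPP : P * P = c • P := by
      ext i j
      simp only [Matrix.mul_apply, Matrix.smul_apply, hP, Matrix.of_apply, smul_eq_mul, hc]
      rw [Finset.sum_congr rfl (fun l _ => show u i * u l * (u l * u j)
        = (u i * u j) * u l ^ 2 by ring), ← Finset.mul_sum]
      ring
    have hMsymm : Mᵀ = M := by
      rw [hM, Matrix.transpose_sub, Matrix.transpose_one, Matrix.transpose_smul, hPsymm]
    have hMM : Mᵀ * M = 1 := by
      rw [hMsymm, hM]
      have expand : ((1 : Matrix (Fin (n+1)) (Fin (n+1)) ℝ) - (2/c) • P) * (1 - (2/c) • P)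
          = 1 - (2/c) • P - (2/c) • P + ((2/c) * (2/c)) • (P * P) := by
        simp only [Matrix.sub_mul, Matrix.mul_sub, Matrix.one_mul, Matrix.mul_one,
          Matrix.smul_mul, Matrix.mul_smul, smul_smul, smul_sub, sub_smul]
        abel
      rw [expand, hPP, smul_smul]
      have hco : (2/c) * (2/c) * c = (2/c) + (2/c) := by field_simp; ring
      rw [hco, add_smul]
      abel
    -- action on e
    have hue : ∑ j, u j * e j = ν (Fin.last n) - 1 := by
      rw [he]
      rw [Finset.sum_eq_single (Fin.last n)]
      · simp [hu, he, Pi.single_apply]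
      · intro b _ hb; simp [he, Pi.single_apply, hb]
      · simp
    have hclast : c = 2 - 2 * ν (Fin.last n) := by
      rw [hc]
      have expand : ∀ i, u i ^ 2 = ν i ^ 2 - 2 * (ν i * e i) + e i ^ 2 := by
        intro i; rw [hu]; simp [Pi.sub_apply]; ring
      rw [Finset.sum_congr rfl (fun i _ => expand i)]
      rw [Finset.sum_add_distrib, Finset.sum_sub_distrib, hunit, ← Finset.mul_sum]
      have h1 : ∑ i, ν i * e i = ν (Fin.last n) := by
        rw [Finset.sum_eq_single (Fin.last n)]
        · simp [he, Pi.single_apply]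
        · intro b _ hb; simp [he, Pi.single_apply, hb]
        · simp
      have h2 : ∑ i, e i ^ 2 = 1 := by
        rw [Finset.sum_eq_single (Fin.last n)]
        · simp [he, Pi.single_apply]
        · intro b _ hb; simp [he, Pi.single_apply, hb]
        · simp
      rw [h1, h2]
      ring
    have hPe : P.mulVec (Pi.single (Fin.last n) 1) = (ν (Fin.last n) - 1) • u := by
      funext i'
      simp only [Matrix.mulVec, dotProduct, hP, Matrix.of_apply, Pi.smul_apply,
        smul_eq_mul]
      rw [Finset.sum_congr rfl (fun j _ => mul_assoc (u i') (u j) _), ← Finset.mul_sum, hue]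
      ring
    have hνlast : ν (Fin.last n) ≠ 1 := by
      intro h1
      apply hcne
      rw [hclast, h1]
      ring
    have hMe : M.mulVec (Pi.single (Fin.last n) 1) = ν := by
      funext i
      rw [hM, Matrix.sub_mulVec, Matrix.one_mulVec, Matrix.smul_mulVec, hPe]
      have hc2 : (2:ℝ) - 2 * ν (Fin.last n) ≠ 0 := by rw [← hclast]; exact hcne
      have hcoef : (2/c) * (ν (Fin.last n) - 1) = -1 := by
        rw [hclast, div_mul_eq_mul_div, div_eq_iff hc2]
        ring
      simp only [Pi.sub_apply, Pi.smul_apply, smul_eq_mul]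
      rw [← mul_assoc, hcoef]
      have : u i = ν i - e i := by rw [hu]; simp
      rw [this, he]
      ring
    have hMrat : RatMat M := by
      choose r hr using hrat
      set uq : Fin (n+1) → ℚ := fun i => r i - (if i = Fin.last n then 1 else 0) with huq
      have hucast : ∀ i, u i = (uq i : ℝ) := by
        intro i
        rw [hu, huq]
        simp only [Pi.sub_apply, he, Pi.single_apply, hr i]
        push_cast
        split <;> simp
      set cq : ℚ := ∑ i, uq i ^ 2 with hcq
      have hccast : c = (cq : ℝ) := by
        rw [hc, hcq]
        push_cast
        exact Finset.sum_congr rfl fun i _ => by rw [hucast i]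
      refine ⟨Matrix.of fun i j => (if i = j then (1:ℚ) else 0) - 2 * uq i * uq j / cq, ?_⟩
      ext i j
      rw [hM]
      simp only [Matrix.sub_apply, Matrix.smul_apply, Matrix.map_apply, Matrix.of_apply,
        Matrix.one_apply, hP, smul_eq_mul]
      rw [hucast i, hucast j, hccast]
      push_cast
      split <;> ring
    exact ⟨M, hMM, hMrat, hMe⟩

section Emb

variable {α : Type*} [CommRing α] {n : ℕ}

private def embM (X : Matrix (Fin n) (Fin n) α) : Matrix (Fin (n+1)) (Fin (n+1)) α :=
  (Matrix.fromBlocks X 0 0 (1 : Matrix (Fin 1) (Fin 1) α)).submatrix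
    (finSumFinEquiv (m := n) (n := 1)).symm (finSumFinEquiv (m := n) (n := 1)).symm

private lemma finSumFinEquiv_inr_zero : finSumFinEquiv (Sum.inr (0 : Fin 1)) = Fin.last n := by
  apply Fin.ext
  simp [finSumFinEquiv, Fin.last]

private lemma finSumFinEquiv_inl_ne_last (i : Fin n) :
    finSumFinEquiv (Sum.inl i) ≠ Fin.last n := by
  rw [← finSumFinEquiv_inr_zero]
  intro h
  exact absurd (finSumFinEquiv.injective h) (by simp)

private lemma embM_apply_inl_inl (X : Matrix (Fin n) (Fin n) α) (i j : Fin n) :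
    embM X (finSumFinEquiv (Sum.inl i)) (finSumFinEquiv (Sum.inl j)) = X i j := by
  simp [embM]

private lemma embM_mul (X Y : Matrix (Fin n) (Fin n) α) :
    embM X * embM Y = embM (X * Y) := by
  rw [embM, embM, embM, Matrix.submatrix_mul_equiv, Matrix.fromBlocks_multiply]
  congr 1
  simp

private lemma embM_transpose (X : Matrix (Fin n) (Fin n) α) : (embM X)ᵀ = embM Xᵀ := by
  rw [embM, embM, Matrix.transpose_submatrix, Matrix.fromBlocks_transpose]
  congr 1
  simp

private lemma embM_one : embM (1 : Matrix (Fin n) (Fin n) α) = 1 := by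
  rw [embM, Matrix.fromBlocks_one]
  exact Matrix.submatrix_one_equiv _

private lemma embM_det (X : Matrix (Fin n) (Fin n) α) : (embM X).det = X.det := by
  rw [embM, Matrix.det_submatrix_equiv_self, Matrix.det_fromBlocks_zero₂₁]
  simp

private lemma embM_inj {X Y : Matrix (Fin n) (Fin n) α} (h : embM X = embM Y) : X = Y := by
  ext i j
  have := congrFun (congrFun h (finSumFinEquiv (Sum.inl i))) (finSumFinEquiv (Sum.inl j))
  rwa [embM_apply_inl_inl, embM_apply_inl_inl] at this

private lemma embM_mulVec_single (X : Matrix (Fin n) (Fin n) α) :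
    (embM X).mulVec (Pi.single (Fin.last n) 1) = Pi.single (Fin.last n) 1 := by
  funext i
  have hcol : (embM X).mulVec (Pi.single (Fin.last n) 1) i = embM X i (Fin.last n) := by
    simp only [Matrix.mulVec, dotProduct]
    rw [Finset.sum_eq_single (Fin.last n)]
    · simp
    · intro b _ hb; simp [Pi.single_apply, hb]
    · simp
  rw [hcol]
  obtain ⟨x, rfl⟩ := finSumFinEquiv.surjective i
  cases x with
  | inl a =>
    rw [Pi.single_apply, if_neg (finSumFinEquiv_inl_ne_last a), ← finSumFinEquiv_inr_zero]
    simp [embM]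
  | inr b =>
    have hb : b = 0 := Subsingleton.elim _ _
    subst hb
    rw [finSumFinEquiv_inr_zero, Pi.single_apply, if_pos rfl, ← finSumFinEquiv_inr_zero]
    simp [embM]

end Emb

private lemma ratMat_embM {n : ℕ} {X : Matrix (Fin n) (Fin n) ℝ} (h : RatMat X) :
    RatMat (embM X) := by
  obtain ⟨Q, rfl⟩ := h
  refine ⟨embM Q, ?_⟩
  ext a b
  obtain ⟨x, rfl⟩ := finSumFinEquiv.surjective a
  obtain ⟨y, rfl⟩ := finSumFinEquiv.surjective b
  cases x <;> cases y <;>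
    simp [embM, Matrix.map_apply, Matrix.one_apply] <;> split <;> simp

private lemma embM_apply_inl_last {α : Type*} [CommRing α] {n : ℕ}
    (X : Matrix (Fin n) (Fin n) α) (i : Fin n) :
    embM X (finSumFinEquiv (Sum.inl i)) (Fin.last n) = 0 := by
  rw [← finSumFinEquiv_inr_zero]
  simp [embM]

private lemma embM_apply_last_inl {α : Type*} [CommRing α] {n : ℕ}
    (X : Matrix (Fin n) (Fin n) α) (j : Fin n) :
    embM X (Fin.last n) (finSumFinEquiv (Sum.inl j)) = 0 := by
  rw [← finSumFinEquiv_inr_zero]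
  simp [embM]

private lemma embM_apply_last_last {α : Type*} [CommRing α] {n : ℕ}
    (X : Matrix (Fin n) (Fin n) α) :
    embM X (Fin.last n) (Fin.last n) = 1 := by
  rw [← finSumFinEquiv_inr_zero]
  simp [embM, Matrix.one_apply]

private lemma sum_split {n : ℕ} (f : Fin (n+1) → ℝ) :
    ∑ a, f a = (∑ i : Fin n, f (finSumFinEquiv (Sum.inl i))) + f (Fin.last n) := by
  rw [← Equiv.sum_comp (finSumFinEquiv (m := n) (n := 1)) f, Fintype.sum_sum_type]
  congr 1
  rw [Fin.sum_univ_one, finSumFinEquiv_inr_zero]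

private lemma sum_sq_embM_sub {n : ℕ} (X Y : Matrix (Fin n) (Fin n) ℝ) :
    ∑ a, ∑ b, ((embM X - embM Y) a b)^2 = ∑ i, ∑ j, (X i j - Y i j)^2 := by
  have hD : ∀ a b, (embM X - embM Y) a b = embM X a b - embM Y a b := fun a b => rfl
  rw [sum_split (fun a => ∑ b, ((embM X - embM Y) a b)^2)]
  have hrow : ∀ i : Fin n, ∑ b, ((embM X - embM Y) (finSumFinEquiv (Sum.inl i)) b)^2
      = ∑ j, (X i j - Y i j)^2 := by
    intro i
    rw [sum_split (fun b => ((embM X - embM Y) (finSumFinEquiv (Sum.inl i)) b)^2)]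
    rw [Finset.sum_congr rfl (fun j _ => by
      rw [hD, embM_apply_inl_inl, embM_apply_inl_inl])]
    rw [hD, embM_apply_inl_last, embM_apply_inl_last]
    norm_num
  have hlastrow : ∑ b, ((embM X - embM Y) (Fin.last n) b)^2 = 0 := by
    rw [sum_split (fun b => ((embM X - embM Y) (Fin.last n) b)^2)]
    rw [Finset.sum_congr rfl (fun j _ => by
      rw [hD, embM_apply_last_inl, embM_apply_last_inl])]
    rw [hD, embM_apply_last_last, embM_apply_last_last]
    norm_num
  rw [hlastrow, add_zero]
  exact Finset.sum_congr rfl fun i _ => hrow i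

/-- rational rotations sending `e_N` to a prescribed rational unit
vector `ν` are dense among all rotations sending `e_N` to `ν`. -/
theorem rational_rotations_dense_fixing_vector (n : ℕ) (ε : ℝ) (hε : 0 < ε)
    (ν : Fin (n + 1) → ℝ) (hrat : ∀ i, ∃ q : ℚ, ν i = q)
    (hunit : ∑ i, ν i ^ 2 = 1)
    (S : Matrix (Fin (n + 1)) (Fin (n + 1)) ℝ)
    (hS : S.transpose * S = 1) (hdet : S.det = 1)
    (hSν : S.mulVec (Pi.single (Fin.last n) 1) = ν) :
    ∃ R : Matrix (Fin (n + 1)) (Fin (n + 1)) ℝ,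
      R.transpose * R = 1 ∧ R.det = 1 ∧ (∀ i j, ∃ q : ℚ, R i j = q) ∧
      R.mulVec (Pi.single (Fin.last n) 1) = ν ∧
      Real.sqrt (∑ i, ∑ j, (R i j - S i j) ^ 2) < ε := by
  classical
  obtain ⟨M, hMtM, hMrat, hMe⟩ := householder_exists ν hrat hunit
  have hMMt : M * Mᵀ = 1 := mul_eq_one_comm.mp hMtM
  set e : Fin (n+1) → ℝ := Pi.single (Fin.last n) 1 with he
  set W : Matrix (Fin (n+1)) (Fin (n+1)) ℝ := Mᵀ * S with hW
  have hWorth : Wᵀ * W = 1 := by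
    rw [hW, Matrix.transpose_mul, Matrix.transpose_transpose]
    calc Sᵀ * M * (Mᵀ * S) = Sᵀ * (M * Mᵀ) * S := by simp only [Matrix.mul_assoc]
      _ = 1 := by rw [hMMt, Matrix.mul_one, hS]
  have hMW : M * W = S := by
    rw [hW, ← Matrix.mul_assoc, hMMt, Matrix.one_mul]
  have hWe : W.mulVec e = e := by
    rw [hW, ← Matrix.mulVec_mulVec, hSν, ← hMe, Matrix.mulVec_mulVec, hMtM,
      Matrix.one_mulVec]
  have colW : ∀ i, W i (Fin.last n) = e i := by
    intro i
    have h1 := congrFun hWe i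
    have h2 : W.mulVec e i = W i (Fin.last n) := by
      simp only [Matrix.mulVec, dotProduct]
      rw [Finset.sum_eq_single (Fin.last n)]
      · simp [he]
      · intro b _ hb; simp [he, Pi.single_apply, hb]
      · simp
    rw [← h2, h1]
  have hWWt : W * Wᵀ = 1 := mul_eq_one_comm.mp hWorth
  have rowW : ∀ j, j ≠ Fin.last n → W (Fin.last n) j = 0 := by
    have hdiag := congrFun (congrFun hWWt (Fin.last n)) (Fin.last n)
    have hsum : ∑ j, (W (Fin.last n) j)^2 = 1 := by
      simp only [Matrix.mul_apply, Matrix.transpose_apply, Matrix.one_apply_eq] at hdiag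
      rw [← hdiag]
      exact Finset.sum_congr rfl fun j _ => pow_two (W (Fin.last n) j)
    have hll : W (Fin.last n) (Fin.last n) = 1 := by rw [colW, he, Pi.single_eq_same]
    have herase : ∑ j ∈ Finset.univ.erase (Fin.last n), (W (Fin.last n) j)^2 = 0 := by
      have := Finset.sum_erase_add Finset.univ (fun j => (W (Fin.last n) j)^2)
        (Finset.mem_univ (Fin.last n))
      rw [hsum] at this
      simp only [hll, one_pow] at this
      linarith
    intro j hj
    have hmem : j ∈ Finset.univ.erase (Fin.last n) := Finset.mem_erase.mpr ⟨hj, Finset.mem_univ j⟩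
    have := (Finset.sum_eq_zero_iff_of_nonneg (fun j _ => sq_nonneg _)).mp herase j hmem
    exact pow_eq_zero_iff (by norm_num) |>.mp this
  set T : Matrix (Fin n) (Fin n) ℝ :=
    Matrix.of fun i j => W (finSumFinEquiv (Sum.inl i)) (finSumFinEquiv (Sum.inl j)) with hT
  have hWT : W = embM T := by
    ext a b
    obtain ⟨x, rfl⟩ := finSumFinEquiv.surjective a
    obtain ⟨y, rfl⟩ := finSumFinEquiv.surjective b
    cases x with
    | inl i =>
      cases y with
      | inl j => rw [embM_apply_inl_inl]; rfl
      | inr b' =>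
        have : b' = 0 := Subsingleton.elim _ _
        subst this
        rw [finSumFinEquiv_inr_zero, embM_apply_inl_last, colW, he,
          Pi.single_apply, if_neg (finSumFinEquiv_inl_ne_last i)]
    | inr b' =>
      have : b' = 0 := Subsingleton.elim _ _
      subst this
      rw [finSumFinEquiv_inr_zero]
      cases y with
      | inl j => rw [embM_apply_last_inl, rowW _ (finSumFinEquiv_inl_ne_last j)]
      | inr c' =>
        have : c' = 0 := Subsingleton.elim _ _
        subst this
        rw [finSumFinEquiv_inr_zero, embM_apply_last_last, colW, he, Pi.single_eq_same]
  have hTorth : Tᵀ * T = 1 := by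
    apply embM_inj
    rw [← embM_mul, ← embM_transpose, ← hWT, hWorth, embM_one]
  have hδ : 0 < ε / (n+1) := by positivity
  obtain ⟨T', hT'orth, hT'det, hT'rat, hnear⟩ := orthogonal_rat_approx T hTorth hδ
  refine ⟨M * embM T', ?_, ?_, ?_, ?_, ?_⟩
  · rw [Matrix.transpose_mul]
    calc (embM T')ᵀ * Mᵀ * (M * embM T') = (embM T')ᵀ * (Mᵀ * M) * embM T' := by
          simp only [Matrix.mul_assoc]
      _ = (embM T')ᵀ * embM T' := by rw [hMtM, Matrix.mul_one]
      _ = 1 := by rw [embM_transpose, embM_mul, hT'orth, embM_one]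
  · rw [Matrix.det_mul, embM_det, hT'det, ← embM_det T, ← hWT, ← Matrix.det_mul, hMW, hdet]
  · obtain ⟨Q, hQ⟩ := ratMat_mul hMrat (ratMat_embM hT'rat)
    intro i j
    exact ⟨Q i j, by rw [hQ]; rfl⟩
  · rw [← Matrix.mulVec_mulVec, embM_mulVec_single]
    exact hMe
  · have hRS : M * embM T' - S = M * (embM T' - embM T) := by
      rw [Matrix.mul_sub, ← hMW, hWT]
    have hsq : ∑ i, ∑ j, ((M * embM T') i j - S i j) ^ 2
        = ∑ i, ∑ j, (T' i j - T i j)^2 := by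
      calc ∑ i, ∑ j, ((M * embM T') i j - S i j) ^ 2
          = ∑ i, ∑ j, ((M * (embM T' - embM T)) i j) ^ 2 := by
            apply Finset.sum_congr rfl
            intro i _
            apply Finset.sum_congr rfl
            intro j _
            rw [← Matrix.sub_apply, hRS]
        _ = ∑ i, ∑ j, ((embM T' - embM T) i j) ^ 2 := frob_orth_invariant hMtM
        _ = ∑ i, ∑ j, (T' i j - T i j)^2 := sum_sq_embM_sub T' T
    rw [hsq, Real.sqrt_lt' hε]
    have hterm : ∀ i j : Fin n, (T' i j - T i j)^2 ≤ (ε/(n+1))^2 := by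
      intro i j
      have h := abs_lt.mp (hnear i j)
      exact sq_le_sq' (by linarith [h.1]) h.2.le
    have hsumle : ∑ i : Fin n, ∑ j : Fin n, (T' i j - T i j)^2
        ≤ (n:ℝ) * ((n:ℝ) * (ε/(n+1))^2) := by
      calc ∑ i : Fin n, ∑ j : Fin n, (T' i j - T i j)^2
          ≤ ∑ _i : Fin n, ((n:ℝ) * (ε/(n+1))^2) := by
            apply Finset.sum_le_sum
            intro i _
            calc ∑ j, (T' i j - T i j)^2 ≤ ∑ _j : Fin n, (ε/(n+1))^2 :=
                  Finset.sum_le_sum fun j _ => hterm i j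
              _ = (n:ℝ) * (ε/(n+1))^2 := by
                  rw [Finset.sum_const, Finset.card_univ, Fintype.card_fin, nsmul_eq_mul]
        _ = (n:ℝ) * ((n:ℝ) * (ε/(n+1))^2) := by
            rw [Finset.sum_const, Finset.card_univ, Fintype.card_fin, nsmul_eq_mul]
    have hnlt : (n:ℝ) * ((n:ℝ) * (ε/(n+1))^2) < ε^2 := by
      have hn1 : (0:ℝ) < (n:ℝ) + 1 := by positivity
      rw [div_pow]
      rw [mul_div_assoc', mul_div_assoc']
      rw [div_lt_iff₀ (by positivity)]
      have : ((n:ℝ)+1)^2 = (n:ℝ)^2 + 2*(n:ℝ) + 1 := by ring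
      nlinarith [sq_nonneg ε, mul_pos hε hε, Nat.cast_nonneg (α := ℝ) n]
    linarith
end
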